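/- Let f_MF(m) = -(1/2)m² - (1/β) I(m) on [-1,1], where I(m) = -((1-m)/2) log((1-m)/2) - ((1+m)/2) log((1+m)/2). If β ≤ 1, then f_MF is strictly convex on (-1,1); if β > 1, then f_MF has exactly two global minima at ±m*(β), where m*(β) > 0 is the unique positive solution of m = tanh(βm). -/

import Mathlib

open Real Set

lemma tanh_eq' (t : ℝ) : Real.tanh t = (Real.exp (2*t) - 1) / (Real.exp (2*t) + 1) := by
  have h1 : Real.exp t ≠ 0 := (Real.exp_pos t).ne'
  have h2 : Real.exp (2*t) = Real.exp t * Real.exp t := by rw [two_mul, Real.exp_add]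
  have h3 : Real.exp (-t) = (Real.exp t)⁻¹ := Real.exp_neg t
  rw [Real.tanh_eq_sinh_div_cosh, Real.sinh_eq, Real.cosh_eq, h3, h2]
  rw [div_eq_div_iff (by positivity) (by positivity)]
  field_simp

lemma tanh_mem (t : ℝ) : Real.tanh t ∈ Set.Ioo (-1:ℝ) 1 := by
  rw [tanh_eq']
  have h : (0:ℝ) < Real.exp (2*t) + 1 := by positivity
  constructor
  · rw [lt_div_iff₀ h]; nlinarith [Real.exp_pos (2*t)]
  · rw [div_lt_one h]; linarith

lemma tanh_pos {t : ℝ} (ht : 0 < t) : 0 < Real.tanh t := by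
  rw [tanh_eq']
  have h : (1:ℝ) < Real.exp (2*t) := by
    rw [show (1:ℝ) = Real.exp 0 by simp]; exact Real.exp_lt_exp.2 (by linarith)
  have h4 : (0:ℝ) < Real.exp (2*t) + 1 := by positivity
  exact div_pos (by linarith) h4

lemma tanh_eq_iff' {t m : ℝ} (h1 : -1 < m) (h2 : m < 1) :
    Real.tanh t = m ↔ 2*t = Real.log (1+m) - Real.log (1-m) := by
  have hm1 : (0:ℝ) < 1 + m := by linarith
  have hm2 : (0:ℝ) < 1 - m := by linarith
  have hq : (0:ℝ) < (1+m)/(1-m) := by positivity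
  have key : Real.tanh t = m ↔ Real.exp (2*t) = (1+m)/(1-m) := by
    rw [tanh_eq']
    have h4 : (0:ℝ) < Real.exp (2*t) + 1 := by positivity
    constructor
    · intro h
      rw [div_eq_iff h4.ne'] at h
      rw [eq_div_iff hm2.ne']
      nlinarith
    · intro h
      rw [h]
      rw [div_eq_iff (by positivity), div_add_one hm2.ne', div_sub_one hm2.ne']
      field_simp
      ring
  rw [key, ← Real.exp_log hq, Real.exp_eq_exp, Real.log_div hm1.ne' hm2.ne']

/-- Binary entropy `I(m)` on `[-1,1]`. -/
noncomputable def Ient (m : ℝ) : ℝ :=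
  -((1 - m) / 2) * Real.log ((1 - m) / 2) - ((1 + m) / 2) * Real.log ((1 + m) / 2)

/-- Mean-field free energy `f_MF(m) = -(1/2)m² - (1/β) I(m)`. -/
noncomputable def fMF (β m : ℝ) : ℝ := -(1 / 2) * m ^ 2 - (1 / β) * Ient m

noncomputable def gD (β x : ℝ) : ℝ := -x + (Real.log (1+x) - Real.log (1-x)) / (2*β)

lemma Ient_even (m : ℝ) : Ient (-m) = Ient m := by
  unfold Ient; ring_nf

lemma fMF_even (β m : ℝ) : fMF β (-m) = fMF β m := by
  unfold fMF; rw [Ient_even]; ring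

lemma continuous_fMF (β : ℝ) : Continuous (fMF β) := by
  have hI : Ient = fun m => Real.negMulLog ((1-m)/2) + Real.negMulLog ((1+m)/2) := by
    funext m; simp only [Ient, Real.negMulLog]; ring
  unfold fMF; rw [hI]
  fun_prop

lemma hasDerivAt_fMF {β x : ℝ} (hβ : 0 < β) (h1 : -1 < x) (h2 : x < 1) :
    HasDerivAt (fMF β) (gD β x) x := by
  have ha : (0:ℝ) < (1-x)/2 := by linarith
  have hb : (0:ℝ) < (1+x)/2 := by linarith
  have d1 : HasDerivAt (fun y : ℝ => (1-y)/2) (-(1/2)) x := by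
    have := ((hasDerivAt_const x (1:ℝ)).sub (hasDerivAt_id x)).div_const 2
    convert this using 1 <;> norm_num <;> rfl
  have d2 : HasDerivAt (fun y : ℝ => (1+y)/2) (1/2) x := by
    have := ((hasDerivAt_const x (1:ℝ)).add (hasDerivAt_id x)).div_const 2
    convert this using 1 <;> norm_num <;> rfl
  have e1 : HasDerivAt (fun y : ℝ => ((1-y)/2) * Real.log ((1-y)/2))
      ((Real.log ((1-x)/2) + 1) * (-(1/2))) x :=
    by have := (Real.hasDerivAt_mul_log ha.ne').comp x d1; exact this
  have e2 : HasDerivAt (fun y : ℝ => ((1+y)/2) * Real.log ((1+y)/2))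
      ((Real.log ((1+x)/2) + 1) * (1/2)) x :=
    by have := (Real.hasDerivAt_mul_log hb.ne').comp x d2; exact this
  have eI : HasDerivAt Ient
      (-((Real.log ((1-x)/2) + 1) * (-(1/2))) - (Real.log ((1+x)/2) + 1) * (1/2)) x := by
    have : Ient = fun m => -(((1-m)/2) * Real.log ((1-m)/2)) - ((1+m)/2) * Real.log ((1+m)/2) := by
      funext m; simp only [Ient]; ring
    rw [this]
    exact e1.neg.sub e2
  have ex : HasDerivAt (fun m : ℝ => m^2) (2*x) x := by
    simpa using hasDerivAt_pow 2 x
  have eF : HasDerivAt (fMF β)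
      (-(1/2) * (2*x) - (1/β) * (-((Real.log ((1-x)/2) + 1) * (-(1/2))) - (Real.log ((1+x)/2) + 1) * (1/2))) x := by
    unfold fMF
    exact ((ex.const_mul (-(1/2))).sub (eI.const_mul (1/β)))
  convert eF using 1
  unfold gD
  have l1 : Real.log ((1-x)/2) = Real.log (1-x) - Real.log 2 :=
    Real.log_div (by linarith) (by norm_num)
  have l2 : Real.log ((1+x)/2) = Real.log (1+x) - Real.log 2 :=
    Real.log_div (by linarith) (by norm_num)
  rw [l1, l2]
  field_simp
  ring

lemma hasDerivAt_gD {β x : ℝ} (hβ : 0 < β) (h1 : -1 < x) (h2 : x < 1) :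
    HasDerivAt (gD β) (-1 + 1/(β*(1-x^2))) x := by
  have ha : (0:ℝ) < 1 + x := by linarith
  have hb : (0:ℝ) < 1 - x := by linarith
  have d1 : HasDerivAt (fun y : ℝ => Real.log (1+y)) (1/(1+x)) x := by
    have := (Real.hasDerivAt_log ha.ne').comp x ((hasDerivAt_const x (1:ℝ)).add (hasDerivAt_id x))
    simpa [one_div] using ((hasDerivAt_id' x).const_add 1).log ha.ne'
  have d2 : HasDerivAt (fun y : ℝ => Real.log (1-y)) (-(1/(1-x))) x := by
    have := (Real.hasDerivAt_log hb.ne').comp x ((hasDerivAt_const x (1:ℝ)).sub (hasDerivAt_id x))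
    simpa [one_div, neg_div] using ((hasDerivAt_id' x).const_sub 1).log hb.ne'
  have e : HasDerivAt (gD β) (-1 + (1/(1+x) - (-(1/(1-x))))/(2*β)) x := by
    unfold gD
    exact (hasDerivAt_neg x).add ((d1.sub d2).div_const (2*β))
  have hx2 : (0:ℝ) < 1 - x^2 := by nlinarith
  have hne : β*(1-x^2) ≠ 0 := by positivity
  convert e using 1
  field_simp
  ring

lemma gD_zero (β : ℝ) : gD β 0 = 0 := by simp [gD]

/-- If `β ≤ 1` then `f_MF` is strictly convex on `(-1,1)`; if `β > 1` then
`f_MF` has exactly two global minima on `[-1,1]`, at `±m*(β)`, where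
`m*(β) > 0` is the unique positive solution of `m = tanh(βm)`. -/
theorem stmt_7 (β : ℝ) (hβ : 0 < β) :
    (β ≤ 1 → StrictConvexOn ℝ (Set.Ioo (-1 : ℝ) 1) (fMF β)) ∧
    (1 < β → ∃ m : ℝ, 0 < m ∧ m = Real.tanh (β * m) ∧
      (∀ m' : ℝ, 0 < m' → m' = Real.tanh (β * m') → m' = m) ∧
      IsMinOn (fMF β) (Set.Icc (-1 : ℝ) 1) m ∧
      IsMinOn (fMF β) (Set.Icc (-1 : ℝ) 1) (-m) ∧
      ∀ x ∈ Set.Icc (-1 : ℝ) 1,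
        IsMinOn (fMF β) (Set.Icc (-1 : ℝ) 1) x → x = m ∨ x = -m) := by
  have contgD : ∀ s ⊆ Set.Ioo (-1:ℝ) 1, ContinuousOn (gD β) s := fun s hs x hx =>
    ((hasDerivAt_gD hβ (hs hx).1 (hs hx).2).continuousAt).continuousWithinAt
  have derivgD : ∀ x ∈ Set.Ioo (-1:ℝ) 1, deriv (gD β) x = -1 + 1/(β*(1-x^2)) := fun x hx =>
    (hasDerivAt_gD hβ hx.1 hx.2).deriv
  have derivfMF : ∀ x ∈ Set.Ioo (-1:ℝ) 1, deriv (fMF β) x = gD β x := fun x hx =>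
    (hasDerivAt_fMF hβ hx.1 hx.2).deriv
  constructor
  · -- convexity for β ≤ 1
    intro hβ1
    have dpos : ∀ x ∈ Set.Ioo (-1:ℝ) 1, x ≠ 0 → 0 < deriv (gD β) x := by
      intro x hx hx0
      rw [derivgD x hx]
      have hx2 : 0 < 1 - x^2 := by nlinarith [hx.1, hx.2]
      have hxx : 0 < x^2 := by positivity
      have hlt : β * (1-x^2) < 1 := by nlinarith
      have hp : 0 < β*(1-x^2) := by positivity
      have := one_lt_one_div hp hlt
      linarith
    have A : StrictMonoOn (gD β) (Set.Ioc (-1:ℝ) 0) := by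
      apply strictMonoOn_of_deriv_pos (convex_Ioc _ _)
        (contgD _ (fun x hx => ⟨hx.1, lt_of_le_of_lt hx.2 one_pos⟩))
      intro x hx
      rw [interior_Ioc] at hx
      exact dpos x ⟨hx.1, by linarith [hx.2]⟩ (ne_of_lt hx.2)
    have B : StrictMonoOn (gD β) (Set.Ico (0:ℝ) 1) := by
      apply strictMonoOn_of_deriv_pos (convex_Ico _ _)
        (contgD _ (fun x hx => ⟨by linarith [hx.1], hx.2⟩))
      intro x hx
      rw [interior_Ico] at hx
      exact dpos x ⟨by linarith [hx.1], hx.2⟩ (ne_of_gt hx.1)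
    have hmono : StrictMonoOn (gD β) (Set.Ioo (-1:ℝ) 1) := by
      intro x hx y hy hxy
      rcases le_or_gt y 0 with h | h
      · exact A ⟨hx.1, by linarith⟩ ⟨hy.1, h⟩ hxy
      · rcases le_or_gt 0 x with h' | h'
        · exact B ⟨h', hx.2⟩ ⟨h.le, hy.2⟩ hxy
        · exact lt_trans (A ⟨hx.1, h'.le⟩ ⟨by norm_num, le_refl 0⟩ h')
            (B ⟨le_refl 0, one_pos⟩ ⟨h.le, hy.2⟩ h)
    apply StrictMonoOn.strictConvexOn_of_deriv (convex_Ioo _ _) (continuous_fMF β).continuousOn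
    rw [interior_Ioo]
    intro x hx y hy hxy
    rw [derivfMF x hx, derivfMF y hy]
    exact hmono hx hy hxy
  · -- β > 1
    intro hβ1
    have hβ' : 0 < 1 - 1/β := by
      have : 1/β < 1 := by rw [div_lt_one hβ]; exact hβ1
      linarith
    set c := Real.sqrt (1 - 1/β) with hc
    have hc2 : c^2 = 1 - 1/β := Real.sq_sqrt hβ'.le
    have hc0 : 0 < c := Real.sqrt_pos.2 hβ'
    have hc1 : c < 1 := by
      nlinarith [Real.sqrt_nonneg (1 - 1/β), hc2, one_div_pos.2 hβ]
    -- derivative sign facts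
    have dneg : ∀ x, 0 < x → x < c → deriv (gD β) x < 0 := by
      intro x hx0 hxc
      rw [derivgD x ⟨by linarith, by linarith⟩]
      have hx2 : 0 < 1 - x^2 := by nlinarith
      have hp : 0 < β*(1-x^2) := by positivity
      have hgt : 1 < β * (1-x^2) := by
        have hxc2 : x^2 < c^2 := by nlinarith
        have hbc : β * c^2 = β - 1 := by rw [hc2]; field_simp
        nlinarith [mul_lt_mul_of_pos_left hxc2 hβ]
      have : 1/(β*(1-x^2)) < 1 := by rw [div_lt_one hp]; exact hgt
      linarith
    have dpos : ∀ x, c < x → x < 1 → 0 < deriv (gD β) x := by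
      intro x hxc hx1
      rw [derivgD x ⟨by linarith, hx1⟩]
      have hx2 : 0 < 1 - x^2 := by nlinarith
      have hp : 0 < β*(1-x^2) := by positivity
      have hlt : β * (1-x^2) < 1 := by
        have hxc2 : c^2 < x^2 := by nlinarith
        have hbc : β * c^2 = β - 1 := by rw [hc2]; field_simp
        nlinarith [mul_lt_mul_of_pos_left hxc2 hβ]
      have := one_lt_one_div hp hlt
      linarith
    -- monotonicity of gD
    have hA : StrictAntiOn (gD β) (Set.Icc 0 c) := by
      apply strictAntiOn_of_deriv_neg (convex_Icc _ _)
        (contgD _ (fun x hx => ⟨by linarith [hx.1], by linarith [hx.2]⟩))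
      intro x hx
      rw [interior_Icc] at hx
      exact dneg x hx.1 hx.2
    have hB : StrictMonoOn (gD β) (Set.Ico c 1) := by
      apply strictMonoOn_of_deriv_pos (convex_Ico _ _)
        (contgD _ (fun x hx => ⟨by linarith [hx.1], hx.2⟩))
      intro x hx
      rw [interior_Ico] at hx
      exact dpos x hx.1 hx.2
    have gc_neg : gD β c < 0 := by
      have := hA ⟨le_refl 0, hc0.le⟩ ⟨hc0.le, le_refl c⟩ hc0
      rwa [gD_zero] at this
    -- a point where gD is positive
    set y := Real.tanh (2*β) with hy
    have hym := tanh_mem (2*β)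
    have hy0 : 0 < y := tanh_pos (by linarith)
    have hylog : 2*(2*β) = Real.log (1+y) - Real.log (1-y) :=
      (tanh_eq_iff' hym.1 hym.2).1 rfl
    have gy_pos : 0 < gD β y := by
      unfold gD
      rw [← hylog]
      have : 2*(2*β)/(2*β) = 2 := by field_simp
      rw [this]
      linarith [hym.2]
    have hcy : c < y := by
      by_contra h
      push_neg at h
      have := hA ⟨le_refl 0, hc0.le⟩ ⟨hy0.le, h⟩ hy0
      rw [gD_zero] at this
      linarith
    -- IVT
    have hsub : Set.Icc c y ⊆ Set.Ioo (-1:ℝ) 1 :=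
      fun x hx => ⟨by linarith [hx.1], lt_of_le_of_lt hx.2 hym.2⟩
    obtain ⟨m, hmIoo, hgm⟩ : ∃ m ∈ Set.Ioo c y, gD β m = 0 := by
      have := intermediate_value_Ioo hcy.le (contgD _ hsub)
      have h0 : (0:ℝ) ∈ Set.Ioo (gD β c) (gD β y) := ⟨gc_neg, gy_pos⟩
      obtain ⟨m, hm, hm0⟩ := this h0
      exact ⟨m, hm, hm0⟩
    have hm0 : 0 < m := lt_trans hc0 hmIoo.1
    have hm1 : m < 1 := lt_trans hmIoo.2 hym.2
    have hmI : m ∈ Set.Ioo (-1:ℝ) 1 := ⟨by linarith, hm1⟩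
    -- fixed point characterization: gD β x = 0 ↔ x = tanh (β x), for x ∈ (-1,1)
    have fix_iff : ∀ x, -1 < x → x < 1 → (gD β x = 0 ↔ x = Real.tanh (β*x)) := by
      intro x hx1 hx2
      rw [show (x = Real.tanh (β*x)) ↔ (Real.tanh (β*x) = x) from eq_comm,
        tanh_eq_iff' hx1 hx2]
      unfold gD
      have h2β : (2*β) ≠ 0 := by positivity
      constructor
      · intro h
        have hd : (Real.log (1+x) - Real.log (1-x)) / (2*β) = x := by linarith
        have := (div_eq_iff h2β).1 hd
        linarith
      · intro h
        have hx' : 2*(β*x)/(2*β) = x := by field_simp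
        rw [← h, hx']
        ring
    have hmfix : m = Real.tanh (β*m) := (fix_iff m hmI.1 hm1).1 hgm
    -- uniqueness
    have huniq : ∀ m' : ℝ, 0 < m' → m' = Real.tanh (β * m') → m' = m := by
      intro m' hm'0 hm'fix
      have hm'mem : m' ∈ Set.Ioo (-1:ℝ) 1 := hm'fix ▸ tanh_mem (β*m')
      have hgm' : gD β m' = 0 := (fix_iff m' hm'mem.1 hm'mem.2).2 hm'fix
      have hm'c : c < m' := by
        by_contra h
        push_neg at h
        have := hA ⟨le_refl 0, hc0.le⟩ ⟨hm'0.le, h⟩ hm'0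
        rw [gD_zero, hgm'] at this
        linarith
      exact hB.injOn ⟨hm'c.le, hm'mem.2⟩ ⟨hmIoo.1.le, hm1⟩ (by rw [hgm', hgm])
    -- monotonicity of fMF
    have hf_anti : StrictAntiOn (fMF β) (Set.Icc 0 m) := by
      apply strictAntiOn_of_deriv_neg (convex_Icc _ _) (continuous_fMF β).continuousOn
      intro x hx
      rw [interior_Icc] at hx
      have hxI : x ∈ Set.Ioo (-1:ℝ) 1 := ⟨by linarith [hx.1], by linarith [hx.2]⟩
      rw [derivfMF x hxI]
      rcases le_or_gt x c with h | h
      · have := hA ⟨le_refl 0, hc0.le⟩ ⟨hx.1.le, h⟩ hx.1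
        rw [gD_zero] at this
        linarith
      · have := hB ⟨h.le, by linarith [hx.2]⟩ ⟨hmIoo.1.le, hm1⟩ hx.2
        rw [hgm] at this
        linarith
    have hf_mono : StrictMonoOn (fMF β) (Set.Icc m 1) := by
      apply strictMonoOn_of_deriv_pos (convex_Icc _ _) (continuous_fMF β).continuousOn
      intro x hx
      rw [interior_Icc] at hx
      have hxI : x ∈ Set.Ioo (-1:ℝ) 1 := ⟨by linarith [hx.1], hx.2⟩
      rw [derivfMF x hxI]
      have := hB ⟨hmIoo.1.le, hm1⟩ ⟨by linarith [hmIoo.1, hx.1], hx.2⟩ hx.1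
      rw [hgm] at this
      linarith
    -- min value on [0,1]
    have key : ∀ x ∈ Set.Icc (0:ℝ) 1, fMF β m ≤ fMF β x := by
      intro x hx
      rcases le_or_gt x m with h | h
      · rcases eq_or_lt_of_le h with h' | h'
        · rw [h']
        · exact (hf_anti ⟨hx.1, h⟩ ⟨hx.1.trans h, le_refl m⟩ h').le
      · exact (hf_mono ⟨le_refl m, hm1.le⟩ ⟨h.le, hx.2⟩ h).le
    have keyall : ∀ x ∈ Set.Icc (-1:ℝ) 1, fMF β m ≤ fMF β x := by
      intro x hx
      rcases le_or_gt 0 x with h | h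
      · exact key x ⟨h, hx.2⟩
      · rw [← fMF_even β x]
        exact key (-x) ⟨by linarith, by linarith [hx.1]⟩
    have hmin : IsMinOn (fMF β) (Set.Icc (-1:ℝ) 1) m := by
      rw [isMinOn_iff]; exact keyall
    have hminneg : IsMinOn (fMF β) (Set.Icc (-1:ℝ) 1) (-m) := by
      rw [isMinOn_iff]
      intro x hx
      rw [fMF_even]
      exact keyall x hx
    -- strictness: any minimizer is ±m
    have keystrict : ∀ x ∈ Set.Icc (0:ℝ) 1, fMF β x = fMF β m → x = m := by
      intro x hx hfx
      rcases lt_trichotomy x m with h | h | h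
      · have := hf_anti ⟨hx.1, h.le⟩ ⟨hx.1.trans h.le, le_refl m⟩ h
        linarith
      · exact h
      · have := hf_mono ⟨le_refl m, hm1.le⟩ ⟨h.le, hx.2⟩ h
        linarith
    refine ⟨m, hm0, hmfix, huniq, hmin, hminneg, ?_⟩
    intro x hx hxmin
    have h1 : fMF β x ≤ fMF β m := (isMinOn_iff.1 hxmin) m ⟨by linarith, hm1.le⟩
    have h2 : fMF β m ≤ fMF β x := keyall x hx
    have heq : fMF β x = fMF β m := le_antisymm h1 h2
    rcases le_or_gt 0 x with h | h
    · exact Or.inl (keystrict x ⟨h, hx.2⟩ heq)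
    · right
      have : -x = m := by
        apply keystrict (-x) ⟨by linarith, by linarith [hx.1]⟩
        rw [fMF_even]; exact heq
      linarith
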